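/- Let K, J ∈ L¹(ℝ) be nonnegative even functions that are nonincreasing on (0, +∞). Then K * J is (a.e. equal to) an even function nonincreasing on (0, +∞). -/
import Mathlib

open MeasureTheory Real Set Filter

private lemma symmDec {f : ℝ → ℝ} (he : ∀ x, f (-x) = f x) (hm : AntitoneOn f (Set.Ioi 0))
    {u v : ℝ} (hu : 0 < |u|) (huv : |u| ≤ |v|) : f v ≤ f u := by
  have habs : ∀ w : ℝ, f |w| = f w := by
    intro w
    rcases abs_cases w with ⟨h, _⟩ | ⟨h, _⟩
    · rw [h]
    · rw [h, he]
  rw [← habs u, ← habs v]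
  exact hm (mem_Ioi.2 hu) (mem_Ioi.2 (lt_of_lt_of_le hu huv)) huv

private lemma convInt {K J : ℝ → ℝ}
    (hKint : Integrable K) (hJint : Integrable J)
    (hKpos : ∀ x, 0 ≤ K x) (hJpos : ∀ x, 0 ≤ J x)
    (hKeven : ∀ x, K (-x) = K x) (hJeven : ∀ x, J (-x) = J x)
    (hKmono : AntitoneOn K (Set.Ioi 0)) (hJmono : AntitoneOn J (Set.Ioi 0))
    {x : ℝ} (hx : 0 < x) : Integrable (fun y => K (x - y) * J y) := by
  have hmeas : AEStronglyMeasurable (fun y => K (x - y) * J y) volume :=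
    ((hKint.comp_sub_left x).aestronglyMeasurable).mul hJint.aestronglyMeasurable
  have hx2 : (0:ℝ) < |x/2| := by rw [abs_of_pos (by linarith)]; linarith
  refine Integrable.mono'
    ((hJint.const_mul (K (x/2))).add ((hKint.comp_sub_left x).const_mul (J (x/2))))
    hmeas (Filter.Eventually.of_forall fun y => ?_)
  rw [Real.norm_eq_abs, abs_of_nonneg (mul_nonneg (hKpos _) (hJpos _))]
  rcases le_or_gt |y| (x/2) with h | h
  · have hK : K (x - y) ≤ K (x/2) := by
      refine symmDec hKeven hKmono hx2 ?_
      rcases abs_cases y with ⟨h1, h2⟩ | ⟨h1, h2⟩ <;>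
        rcases abs_cases (x - y) with ⟨h3, h4⟩ | ⟨h3, h4⟩ <;>
        rw [abs_of_pos (show (0:ℝ) < x/2 by linarith)] <;> linarith
    have : K (x - y) * J y ≤ K (x/2) * J y :=
      mul_le_mul_of_nonneg_right hK (hJpos y)
    exact this.trans (le_add_of_nonneg_right (mul_nonneg (hJpos _) (hKpos _)))
  · have hJ : J y ≤ J (x/2) := by
      refine symmDec hJeven hJmono hx2 ?_
      rw [abs_of_pos (show (0:ℝ) < x/2 by linarith)]; linarith
    have : K (x - y) * J y ≤ J (x/2) * K (x - y) := by
      rw [mul_comm (J (x/2))]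
      exact mul_le_mul_of_nonneg_left hJ (hKpos _)
    exact this.trans (le_add_of_nonneg_left (mul_nonneg (hKpos _) (hJpos _)))

/-- If `K, J ∈ L¹(ℝ)` are nonnegative even functions, nonincreasing on
`(0,∞)`, then `K * J` is a.e. equal to an even function nonincreasing on `(0,∞)`. -/
theorem stmt3 (K J : ℝ → ℝ)
    (hKint : Integrable K) (hJint : Integrable J)
    (hKpos : ∀ x, 0 ≤ K x) (hJpos : ∀ x, 0 ≤ J x)
    (hKeven : ∀ x, K (-x) = K x) (hJeven : ∀ x, J (-x) = J x)
    (hKmono : AntitoneOn K (Set.Ioi 0)) (hJmono : AntitoneOn J (Set.Ioi 0)) :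
    ∃ H : ℝ → ℝ, (∀ x, H (-x) = H x) ∧ AntitoneOn H (Set.Ioi 0) ∧
      (fun x => ∫ y, K (x - y) * J y) =ᵐ[volume] H := by
  refine ⟨fun x => ∫ y, K (x - y) * J y, ?_, ?_, Filter.EventuallyEq.rfl⟩
  · -- evenness
    intro x
    have h1 : ∀ y : ℝ, K (-x - -y) * J (-y) = K (x - y) * J y := by
      intro y
      rw [hJeven, show -x - -y = -(x - y) by ring, hKeven]
    calc ∫ y, K (-x - y) * J y
        = ∫ y, K (-x - -y) * J (-y) := (integral_neg_eq_self _ _).symm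
      _ = ∫ y, K (x - y) * J y := by simp only [h1]
  · -- antitone
    intro x1 hx1 x2 hx2 h12
    simp only [mem_Ioi] at hx1 hx2
    set s : ℝ := x1 + x2 with hs
    have hf1 : Integrable (fun y => K (x1 - y) * J y) :=
      convInt hKint hJint hKpos hJpos hKeven hJeven hKmono hJmono hx1
    have hf2 : Integrable (fun y => K (x2 - y) * J y) :=
      convInt hKint hJint hKpos hJpos hKeven hJeven hKmono hJmono hx2
    have hf1' : Integrable (fun y => K (x1 - (s - y)) * J (s - y)) := hf1.comp_sub_left s
    have hf2' : Integrable (fun y => K (x2 - (s - y)) * J (s - y)) := hf2.comp_sub_left s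
    -- a.e. avoid four points
    have hne : ∀ c : ℝ, ∀ᵐ y : ℝ, y ≠ c := by
      intro c
      refine (ae_iff).2 ?_
      simp only [ne_eq, not_not, Set.setOf_eq_eq_singleton]
      exact measure_singleton c
    have hpt : ∀ᵐ y : ℝ,
        K (x2 - y) * J y + K (x2 - (s - y)) * J (s - y)
          ≤ K (x1 - y) * J y + K (x1 - (s - y)) * J (s - y) := by
      filter_upwards [hne 0, hne x1, hne x2, hne s] with y hy0 hy1 hy2 hys
      rw [show x2 - (s - y) = -(x1 - y) by rw [hs]; ring, hKeven,
          show x1 - (s - y) = -(x2 - y) by rw [hs]; ring, hKeven]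
      have key : 0 ≤ (K (x1 - y) - K (x2 - y)) * (J y - J (s - y)) := by
        rcases le_total (2 * y) s with hly | hly
        · have hK : K (x2 - y) ≤ K (x1 - y) := by
            refine symmDec hKeven hKmono (abs_pos.2 (sub_ne_zero.2 fun h => hy1 h.symm)) ?_
            rcases abs_cases (x1 - y) with ⟨h1, h2⟩ | ⟨h1, h2⟩ <;>
              rcases abs_cases (x2 - y) with ⟨h3, h4⟩ | ⟨h3, h4⟩ <;> simp only [hs] at hly <;>
                linarith
          have hJ : J (s - y) ≤ J y := by
            refine symmDec hJeven hJmono (abs_pos.2 hy0) ?_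
            rcases abs_cases y with ⟨h1, h2⟩ | ⟨h1, h2⟩ <;>
              rcases abs_cases (s - y) with ⟨h3, h4⟩ | ⟨h3, h4⟩ <;> simp only [hs] at hly h3 h4 ⊢ <;>
                linarith
          exact mul_nonneg (sub_nonneg.2 hK) (sub_nonneg.2 hJ)
        · have hK : K (x1 - y) ≤ K (x2 - y) := by
            refine symmDec hKeven hKmono (abs_pos.2 (sub_ne_zero.2 fun h => hy2 h.symm)) ?_
            rcases abs_cases (x2 - y) with ⟨h1, h2⟩ | ⟨h1, h2⟩ <;>
              rcases abs_cases (x1 - y) with ⟨h3, h4⟩ | ⟨h3, h4⟩ <;> simp only [hs] at hly <;>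
                linarith
          have hJ : J y ≤ J (s - y) := by
            refine symmDec hJeven hJmono (abs_pos.2 (sub_ne_zero.2 fun h => hys h.symm)) ?_
            rcases abs_cases (s - y) with ⟨h1, h2⟩ | ⟨h1, h2⟩ <;>
              rcases abs_cases y with ⟨h3, h4⟩ | ⟨h3, h4⟩ <;> simp only [hs] at hly h1 h2 ⊢ <;>
                linarith
          exact mul_nonneg_of_nonpos_of_nonpos (sub_nonpos.2 hK) (sub_nonpos.2 hJ)
      nlinarith [key]
    have hle :
        (∫ y, (K (x2 - y) * J y + K (x2 - (s - y)) * J (s - y)))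
          ≤ ∫ y, (K (x1 - y) * J y + K (x1 - (s - y)) * J (s - y)) :=
      integral_mono_ae (hf2.add hf2') (hf1.add hf1') hpt
    have e1 : (∫ y, (K (x1 - y) * J y + K (x1 - (s - y)) * J (s - y)))
        = (∫ y, K (x1 - y) * J y) + ∫ y, K (x1 - y) * J y := by
      rw [integral_add hf1 hf1',
        integral_sub_left_eq_self (fun y => K (x1 - y) * J y) volume s]
    have e2 : (∫ y, (K (x2 - y) * J y + K (x2 - (s - y)) * J (s - y)))
        = (∫ y, K (x2 - y) * J y) + ∫ y, K (x2 - y) * J y := by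
      rw [integral_add hf2 hf2',
        integral_sub_left_eq_self (fun y => K (x2 - y) * J y) volume s]
    rw [e1, e2] at hle
    linarith
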